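/- Let n = 3^t·k with t ≥ 3, k positive, gcd(k,3)=1, and let 1 ≤ e ≤ n−1. Then the set A_e = { (e·k + i·n/3^{t−1}) mod n : 0 ≤ i ≤ 3^{t−1}−1 } is a union of 4-cyclotomic cosets modulo n; that is, A_e is closed under multiplication by 4 modulo n. -/

import Mathlib

/-- With `n = 3^t·k`, `t ≥ 3`, `gcd(k,3)=1`, `1 ≤ e ≤ n-1`, the set
`A_e = {(e·k + i·n/3^(t-1)) mod n : 0 ≤ i ≤ 3^(t-1)-1}` is closed under multiplication
by 4 modulo n, i.e. it is a union of 4-cyclotomic cosets modulo n. -/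
theorem Ae_union_of_cyclotomic_cosets (n t k e : ℕ) (ht : 3 ≤ t) (hk : 0 < k)
    (hk3 : Nat.gcd k 3 = 1) (hn : n = 3 ^ t * k) (he1 : 1 ≤ e) (he2 : e ≤ n - 1) :
    (Finset.image (fun x => 4 * x % n)
        ((Finset.range (3 ^ (t - 1))).image (fun i => (e * k + i * (n / 3 ^ (t - 1))) % n))) =
      (Finset.range (3 ^ (t - 1))).image (fun i => (e * k + i * (n / 3 ^ (t - 1))) % n) := by
  set m := t - 1 with hm
  have hn' : n = 3 ^ m * (3 * k) := by
    rw [hn]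
    have : t = m + 1 := by omega
    rw [this, pow_succ]
    ring
  have h3m : 0 < 3 ^ m := Nat.pow_pos (by norm_num)
  have hdiv : n / 3 ^ m = 3 * k := by
    rw [hn', Nat.mul_div_cancel_left _ h3m]
  rw [hdiv]
  set f : ℕ → ℕ := fun i => (e * k + i * (3 * k)) % n with hf
  set σ : ℕ → ℕ := fun i => (e + 4 * i) % 3 ^ m with hσ
  have hσmem : ∀ i, σ i ∈ Finset.range (3 ^ m) := fun i =>
    Finset.mem_range.mpr (Nat.mod_lt _ h3m)
  -- key computation : 4 * f i % n = f (σ i)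
  have key : ∀ i, 4 * f i % n = f (σ i) := by
    intro i
    have h1 : 4 * f i % n = 4 * (e * k + i * (3 * k)) % n := by
      rw [hf]
      simp [Nat.mul_mod]
    rw [h1, hf, hσ]
    have hqr : 3 ^ m * ((e + 4 * i) / 3 ^ m) + (e + 4 * i) % 3 ^ m = e + 4 * i :=
      Nat.div_add_mod _ _
    have heq : 4 * (e * k + i * (3 * k)) =
        (e * k + ((e + 4 * i) % 3 ^ m) * (3 * k)) + ((e + 4 * i) / 3 ^ m) * n := by
      rw [hn']
      zify
      zify at hqr
      linear_combination (-3 * (k : ℤ)) * hqr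
    rw [heq, Nat.add_mul_mod_self_right]
  have himg : Finset.image σ (Finset.range (3 ^ m)) = Finset.range (3 ^ m) := by
    apply Finset.eq_of_subset_of_card_le
    · intro x hx
      obtain ⟨i, _, rfl⟩ := Finset.mem_image.mp hx
      exact hσmem i
    · rw [Finset.card_image_of_injOn]
      intro i hi j hj hij
      simp only [Finset.mem_coe, Finset.mem_range] at hi hj
      have h4 : Nat.gcd (3 ^ m) 4 = 1 := Nat.Coprime.pow_left m (by decide)
      have hmod : e + 4 * i ≡ e + 4 * j [MOD 3 ^ m] := hij
      have hmod2 : 4 * i ≡ 4 * j [MOD 3 ^ m] := Nat.ModEq.add_left_cancel' e hmod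
      have hmod3 : i ≡ j [MOD 3 ^ m] := hmod2.cancel_left_of_coprime h4
      have := hmod3
      unfold Nat.ModEq at this
      rwa [Nat.mod_eq_of_lt hi, Nat.mod_eq_of_lt hj] at this
  calc Finset.image (fun x => 4 * x % n) (Finset.image f (Finset.range (3 ^ m)))
      = Finset.image (fun i => 4 * f i % n) (Finset.range (3 ^ m)) := by rw [Finset.image_image]; rfl
    _ = Finset.image (fun i => f (σ i)) (Finset.range (3 ^ m)) := by
        apply Finset.image_congr
        intro i _
        exact key i
    _ = Finset.image f (Finset.image σ (Finset.range (3 ^ m))) := by rw [Finset.image_image]; rfl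
    _ = Finset.image f (Finset.range (3 ^ m)) := by rw [himg]
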